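/- For all integers k ≥ 1 and n > 3k, the set of facets of the Vietoris–Rips complex VR(T_{n,n};k) is exactly M_{n,k} = {π_n(σ) : σ a facet of VR(ℤ²;k)}. -/

import Mathlib

/-- The ℓ¹ metric on `ℤ × ℤ`. -/
def dZ2 (x y : ℤ × ℤ) : ℤ := |x.1 - y.1| + |x.2 - y.2|

/-- `σ` is a simplex of the Vietoris–Rips complex `VR(V; k)` of the metric space `V`
with (integer-valued) distance `d`: a finite nonempty subset of diameter at most `k`. -/
def IsVRSimplex {V : Type*} (d : V → V → ℤ) (k : ℤ) (σ : Finset V) : Prop :=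
  σ.Nonempty ∧ ∀ x ∈ σ, ∀ y ∈ σ, d x y ≤ k

/-- `σ` is a facet (maximal simplex) of the Vietoris–Rips complex `VR(V; k)`. -/
def IsVRFacet {V : Type*} (d : V → V → ℤ) (k : ℤ) (σ : Finset V) : Prop :=
  IsVRSimplex d k σ ∧ ∀ τ : Finset V, IsVRSimplex d k τ → σ ⊆ τ → σ = τ

/-- The circular metric on `ZMod n` (shortest-path metric of the cycle graph `C_n`). -/
def cZdist (n : ℕ) (x y : ZMod n) : ℤ := min ((x - y).val : ℤ) ((y - x).val : ℤ)

/-- The ℓ¹ (quotient) metric on the `n × n` torus grid `T_{n,n} = ℤ²/G_n`,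
realized on `ZMod n × ZMod n`. -/
def tdist (n : ℕ) (x y : ZMod n × ZMod n) : ℤ := cZdist n x.1 y.1 + cZdist n x.2 y.2

/-- The quotient map `π_n : ℤ² → ℤ²/G_n`, where `G_n = nℤ × nℤ` and the quotient
is realized as `ZMod n × ZMod n`. -/
def proj (n : ℕ) (x : ℤ × ℤ) : ZMod n × ZMod n := ((x.1 : ZMod n), (x.2 : ZMod n))

/-- `M_{n,k}`: the images under `π_n` of the facets of `VR(ℤ²; k)`. -/
def Mfacets (n : ℕ) (k : ℤ) : Set (Finset (ZMod n × ZMod n)) :=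
  {τ | ∃ σ : Finset (ℤ × ℤ), IsVRFacet dZ2 k σ ∧ τ = σ.image (proj n)}

def srep (n : ℕ) (z : ZMod n) : ℤ :=
  if 2 * (z.val : ℤ) ≤ n then (z.val : ℤ) else (z.val : ℤ) - n

lemma srep_cast {n : ℕ} [NeZero n] (z : ZMod n) : ((srep n z : ℤ) : ZMod n) = z := by
  unfold srep
  split <;> push_cast <;>
    simp [ZMod.natCast_val, ZMod.cast_id, ZMod.natCast_self]

lemma srep_abs_le {n : ℕ} [NeZero n] (z : ZMod n) : 2 * |srep n z| ≤ n := by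
  have h := ZMod.val_lt z
  unfold srep
  split
  · rw [abs_of_nonneg (by positivity)]; omega
  · rw [abs_of_nonpos (by omega)]; omega

lemma srep_intCast {n : ℕ} [NeZero n] (m : ℤ) (hm : 2 * |m| < n) :
    srep n ((m : ZMod n)) = m := by
  have h := ZMod.val_intCast (n := n) m
  have habs := abs_cases m
  have hmod : m % (n : ℤ) = m ∨ m % (n : ℤ) = m + n := by
    rcases habs with ⟨h1, _⟩ | ⟨h1, _⟩
    · left; exact Int.emod_eq_of_lt (by omega) (by omega)
    · right
      have e : (m + n) % (n : ℤ) = m + n := Int.emod_eq_of_lt (by omega) (by omega)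
      have e2 : (m + (n : ℤ) * 1) % (n : ℤ) = m % n := Int.add_mul_emod_self_left _ _ _
      simp only [mul_one] at e2
      omega
  unfold srep
  rw [h]
  rcases hmod with hm2 | hm2 <;> rcases habs with ⟨h1, _⟩ | ⟨h1, _⟩ <;> split <;> omega

lemma cZdist_eq_abs_srep {n : ℕ} [NeZero n] (u v : ZMod n) :
    cZdist n u v = |srep n (u - v)| := by
  unfold cZdist srep
  rcases eq_or_ne (u - v) 0 with h | h
  · have h2 : v - u = 0 := by rw [← neg_sub]; simp [h]
    simp [h, h2]
  · have h2 : v - u = -(u - v) := by ring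
    rw [h2, ZMod.neg_val]
    have h3 := ZMod.val_lt (u - v)
    have h4 : (u - v).val ≠ 0 := by
      simpa [ZMod.val_eq_zero] using h
    simp only [if_neg h]
    split
    · rw [abs_of_nonneg (by positivity)]
      omega
    · rw [abs_of_nonpos (by omega)]
      omega

lemma cZdist_nonneg {n : ℕ} (u v : ZMod n) : 0 ≤ cZdist n u v :=
  le_min (Int.natCast_nonneg _) (Int.natCast_nonneg _)

lemma cZdist_comm {n : ℕ} (u v : ZMod n) : cZdist n u v = cZdist n v u :=
  min_comm _ _

lemma cZdist_sub_right {n : ℕ} (a b c : ZMod n) :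
    cZdist n (a - c) (b - c) = cZdist n a b := by
  unfold cZdist
  rw [sub_sub_sub_cancel_right, sub_sub_sub_cancel_right]

lemma cZdist_le_abs {n : ℕ} [NeZero n] (a b : ℤ) :
    cZdist n (a : ZMod n) (b : ZMod n) ≤ |a - b| := by
  have key : ∀ m : ℤ, |srep n ((m : ZMod n))| ≤ |m| := by
    intro m
    have h1 := srep_abs_le (n := n) ((m : ZMod n))
    set s := srep n ((m : ZMod n)) with hs
    have h2 : ((m - s : ℤ) : ZMod n) = 0 := by push_cast [hs, srep_cast]; ring
    rw [ZMod.intCast_zmod_eq_zero_iff_dvd] at h2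
    rcases eq_or_ne (m - s) 0 with h | h
    · have : s = m := by omega
      rw [this]
    · have hpos : 0 < |m - s| := abs_pos.mpr h
      have hdvd : (n : ℤ) ∣ |m - s| := (dvd_abs _ _).mpr h2
      have hge : (n : ℤ) ≤ |m - s| := Int.le_of_dvd hpos hdvd
      have htri : |m - s| ≤ |m| + |s| := abs_sub m s
      omega
  have hx : (a : ZMod n) - (b : ZMod n) = ((a - b : ℤ) : ZMod n) := by push_cast; ring
  rw [cZdist_eq_abs_srep, hx]
  exact key _

lemma srep_sub_eq {n : ℕ} [NeZero n] {k : ℤ} (hn : 3 * k < n) (u v : ZMod n)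
    (hu : |srep n u| ≤ k) (hv : |srep n v| ≤ k) (huv : cZdist n u v ≤ k) :
    |srep n u - srep n v| = cZdist n u v := by
  rw [cZdist_eq_abs_srep] at huv ⊢
  have hcast : ((srep n u - srep n v - srep n (u - v) : ℤ) : ZMod n) = 0 := by
    push_cast [srep_cast]; ring
  rw [ZMod.intCast_zmod_eq_zero_iff_dvd] at hcast
  set a := srep n u
  set b := srep n v
  set w := srep n (u - v) with hw
  have habs : |a - b - w| < n := by
    rcases abs_cases a with ⟨h1, _⟩ | ⟨h1, _⟩ <;>
      rcases abs_cases b with ⟨h2, _⟩ | ⟨h2, _⟩ <;>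
      rcases abs_cases w with ⟨h3, _⟩ | ⟨h3, _⟩ <;>
      rcases abs_cases (a - b - w) with ⟨h4, _⟩ | ⟨h4, _⟩ <;> omega
  have h0 : a - b - w = 0 := Int.eq_zero_of_abs_lt_dvd hcast habs
  have : a - b = w := by omega
  rw [this]

/-- The lift of a torus point, relative to a base point `b` of `ℤ²`. -/
def lift (n : ℕ) (b : ℤ × ℤ) (t : ZMod n × ZMod n) : ℤ × ℤ :=
  (b.1 + srep n (t.1 - (b.1 : ZMod n)), b.2 + srep n (t.2 - (b.2 : ZMod n)))

lemma proj_lift {n : ℕ} [NeZero n] (b : ℤ × ℤ) (t : ZMod n × ZMod n) :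
    proj n (lift n b t) = t := by
  unfold proj lift
  ext
  · show ((b.1 + srep n (t.1 - (b.1 : ZMod n)) : ℤ) : ZMod n) = t.1
    push_cast [srep_cast]; ring
  · show ((b.2 + srep n (t.2 - (b.2 : ZMod n)) : ℤ) : ZMod n) = t.2
    push_cast [srep_cast]; ring

lemma lift_proj {n : ℕ} [NeZero n] {k : ℤ} (hkn : 2 * k < n) (b x : ℤ × ℤ)
    (hb : dZ2 x b ≤ k) : lift n b (proj n x) = x := by
  unfold dZ2 at hb
  have h1 : |x.1 - b.1| ≤ k := by
    have := abs_nonneg (x.2 - b.2); omega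
  have h2 : |x.2 - b.2| ≤ k := by
    have := abs_nonneg (x.1 - b.1); omega
  unfold lift proj
  have e1 : (x.1 : ZMod n) - (b.1 : ZMod n) = ((x.1 - b.1 : ℤ) : ZMod n) := by push_cast; ring
  have e2 : (x.2 : ZMod n) - (b.2 : ZMod n) = ((x.2 - b.2 : ℤ) : ZMod n) := by push_cast; ring
  ext
  · show b.1 + srep n ((x.1 : ZMod n) - (b.1 : ZMod n)) = x.1
    rw [e1, srep_intCast (x.1 - b.1) (by omega)]; ring
  · show b.2 + srep n ((x.2 : ZMod n) - (b.2 : ZMod n)) = x.2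
    rw [e2, srep_intCast (x.2 - b.2) (by omega)]; ring

lemma lift_dist {n : ℕ} [NeZero n] {k : ℤ} (hn : 3 * k < n) (b : ℤ × ℤ)
    (s t : ZMod n × ZMod n)
    (hs : tdist n (proj n b) s ≤ k) (ht : tdist n (proj n b) t ≤ k)
    (hst : tdist n s t ≤ k) :
    dZ2 (lift n b s) (lift n b t) = tdist n s t := by
  unfold tdist at hs ht hst ⊢
  unfold proj at hs ht
  dsimp only at hs ht
  have hs1 : cZdist n (b.1 : ZMod n) s.1 ≤ k := by
    have := cZdist_nonneg (n := n) ((b.2 : ZMod n)) s.2; omega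
  have hs2 : cZdist n (b.2 : ZMod n) s.2 ≤ k := by
    have := cZdist_nonneg (n := n) ((b.1 : ZMod n)) s.1; omega
  have ht1 : cZdist n (b.1 : ZMod n) t.1 ≤ k := by
    have := cZdist_nonneg (n := n) ((b.2 : ZMod n)) t.2; omega
  have ht2 : cZdist n (b.2 : ZMod n) t.2 ≤ k := by
    have := cZdist_nonneg (n := n) ((b.1 : ZMod n)) t.1; omega
  have hst1 : cZdist n s.1 t.1 ≤ k := by
    have := cZdist_nonneg (n := n) s.2 t.2; omega
  have hst2 : cZdist n s.2 t.2 ≤ k := by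
    have := cZdist_nonneg (n := n) s.1 t.1; omega
  unfold dZ2 lift
  have key : ∀ (u v w : ZMod n), cZdist n w u ≤ k → cZdist n w v ≤ k → cZdist n u v ≤ k →
      |(srep n (u - w)) - (srep n (v - w))| = cZdist n u v := by
    intro u v w h1 h2 h3
    have e1 : |srep n (u - w)| ≤ k := by
      rw [cZdist_comm, cZdist_eq_abs_srep] at h1; exact h1
    have e2 : |srep n (v - w)| ≤ k := by
      rw [cZdist_comm, cZdist_eq_abs_srep] at h2; exact h2
    have e3 : cZdist n (u - w) (v - w) ≤ k := by rw [cZdist_sub_right]; exact h3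
    rw [srep_sub_eq hn _ _ e1 e2 e3, cZdist_sub_right]
  have k1 := key s.1 t.1 (b.1 : ZMod n) hs1 ht1 hst1
  have k2 := key s.2 t.2 (b.2 : ZMod n) hs2 ht2 hst2
  have g1 : b.1 + srep n (s.1 - (b.1 : ZMod n)) - (b.1 + srep n (t.1 - (b.1 : ZMod n)))
      = srep n (s.1 - (b.1 : ZMod n)) - srep n (t.1 - (b.1 : ZMod n)) := by ring
  have g2 : b.2 + srep n (s.2 - (b.2 : ZMod n)) - (b.2 + srep n (t.2 - (b.2 : ZMod n)))
      = srep n (s.2 - (b.2 : ZMod n)) - srep n (t.2 - (b.2 : ZMod n)) := by ring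
  simp only [g1, g2, k1, k2]

lemma tdist_proj_le {n : ℕ} [NeZero n] (x y : ℤ × ℤ) :
    tdist n (proj n x) (proj n y) ≤ dZ2 x y := by
  unfold tdist proj dZ2
  dsimp only
  have h1 := cZdist_le_abs (n := n) x.1 y.1
  have h2 := cZdist_le_abs (n := n) x.2 y.2
  omega

lemma image_proj_simplex {n : ℕ} [NeZero n] {k : ℤ} {σ : Finset (ℤ × ℤ)}
    (h : IsVRSimplex dZ2 k σ) : IsVRSimplex (tdist n) k (σ.image (proj n)) := by
  obtain ⟨hne, hd⟩ := h
  refine ⟨hne.image _, ?_⟩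
  intro x hx y hy
  simp only [Finset.mem_image] at hx hy
  obtain ⟨a, ha, rfl⟩ := hx
  obtain ⟨b, hb, rfl⟩ := hy
  exact le_trans (tdist_proj_le a b) (hd a ha b hb)

/-- Every VR-simplex of `ℤ²` is contained in a facet. -/
lemma exists_facet {k : ℤ} (hk : 0 ≤ k) {σ0 : Finset (ℤ × ℤ)}
    (h : IsVRSimplex dZ2 k σ0) : ∃ σ, IsVRFacet dZ2 k σ ∧ σ0 ⊆ σ := by
  classical
  obtain ⟨p, hp⟩ := h.1
  set B : Finset (ℤ × ℤ) := Finset.Icc (p.1 - k, p.2 - k) (p.1 + k, p.2 + k) with hB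
  have hsub : ∀ τ : Finset (ℤ × ℤ), IsVRSimplex dZ2 k τ → σ0 ⊆ τ → τ ⊆ B := by
    intro τ hτ hτ0 x hx
    have hd := hτ.2 x hx p (hτ0 hp)
    unfold dZ2 at hd
    have h1 : |x.1 - p.1| ≤ k := by have := abs_nonneg (x.2 - p.2); omega
    have h2 : |x.2 - p.2| ≤ k := by have := abs_nonneg (x.1 - p.1); omega
    rw [hB, Finset.mem_Icc]
    rcases abs_cases (x.1 - p.1) with ⟨e1, _⟩ | ⟨e1, _⟩ <;>
      rcases abs_cases (x.2 - p.2) with ⟨e2, _⟩ | ⟨e2, _⟩ <;>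
      exact ⟨⟨by omega, by omega⟩, ⟨by omega, by omega⟩⟩
  set S : Finset (Finset (ℤ × ℤ)) :=
    B.powerset.filter (fun τ => IsVRSimplex dZ2 k τ ∧ σ0 ⊆ τ) with hS
  have hmem : ∀ τ, τ ∈ S ↔ IsVRSimplex dZ2 k τ ∧ σ0 ⊆ τ := by
    intro τ
    rw [hS, Finset.mem_filter, Finset.mem_powerset]
    constructor
    · rintro ⟨_, h1, h2⟩; exact ⟨h1, h2⟩
    · rintro ⟨h1, h2⟩; exact ⟨hsub τ h1 h2, h1, h2⟩
  have hSne : S.Nonempty := ⟨σ0, (hmem σ0).mpr ⟨h, Finset.Subset.refl _⟩⟩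
  obtain ⟨σ, hσS, hmax⟩ := S.exists_maximal hSne
  rw [hmem] at hσS
  refine ⟨σ, ⟨hσS.1, ?_⟩, hσS.2⟩
  intro τ hτ hστ
  have hτS : τ ∈ S := (hmem τ).mpr ⟨hτ, hσS.2.trans hστ⟩
  by_contra hne
  exact hne (le_antisymm hστ (hmax hτS hστ))

theorem stmt10 (k : ℤ) (n : ℕ) (hk : 1 ≤ k) (hn : 3 * k < (n : ℤ))
    (τ : Finset (ZMod n × ZMod n)) :
    IsVRFacet (tdist n) k τ ↔ τ ∈ Mfacets n k := by
  have hn0 : 0 < n := by omega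
  haveI : NeZero n := ⟨hn0.ne'⟩
  constructor
  · rintro ⟨hτs, hτmax⟩
    obtain ⟨t0, ht0⟩ := hτs.1
    set b : ℤ × ℤ := ((t0.1.val : ℤ), (t0.2.val : ℤ)) with hb
    have hpb : proj n b = t0 := by
      unfold proj
      ext <;> simp [hb, ZMod.natCast_val, ZMod.cast_id]
    set σ0 := τ.image (lift n b) with hσ0def
    have hσ0 : IsVRSimplex dZ2 k σ0 := by
      refine ⟨hτs.1.image _, ?_⟩
      intro x hx y hy
      simp only [hσ0def, Finset.mem_image] at hx hy
      obtain ⟨s, hs, rfl⟩ := hx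
      obtain ⟨t, ht, rfl⟩ := hy
      rw [lift_dist hn b s t (by rw [hpb]; exact hτs.2 t0 ht0 s hs)
        (by rw [hpb]; exact hτs.2 t0 ht0 t ht) (hτs.2 s hs t ht)]
      exact hτs.2 s hs t ht
    obtain ⟨σ, hσ, hσ0σ⟩ := exists_facet (by omega) hσ0
    refine ⟨σ, hσ, ?_⟩
    refine hτmax _ (image_proj_simplex hσ.1) ?_
    intro t ht
    have hmem : lift n b t ∈ σ0 := Finset.mem_image_of_mem _ ht
    exact Finset.mem_image.mpr ⟨lift n b t, hσ0σ hmem, proj_lift b t⟩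
  · rintro ⟨σ, hσ, rfl⟩
    refine ⟨image_proj_simplex hσ.1, ?_⟩
    intro τ' hτ' hsub
    obtain ⟨p, hp⟩ := hσ.1.1
    have hpτ' : proj n p ∈ τ' := hsub (Finset.mem_image_of_mem _ hp)
    set σ1 := τ'.image (lift n p) with hσ1def
    have hσ1 : IsVRSimplex dZ2 k σ1 := by
      refine ⟨hτ'.1.image _, ?_⟩
      intro x hx y hy
      simp only [hσ1def, Finset.mem_image] at hx hy
      obtain ⟨s, hs, rfl⟩ := hx
      obtain ⟨t, ht, rfl⟩ := hy
      rw [lift_dist hn p s t (hτ'.2 _ hpτ' s hs) (hτ'.2 _ hpτ' t ht) (hτ'.2 s hs t ht)]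
      exact hτ'.2 s hs t ht
    have hσσ1 : σ ⊆ σ1 := by
      intro x hx
      have hd : dZ2 x p ≤ k := hσ.1.2 x hx p hp
      have hx' : proj n x ∈ τ' := hsub (Finset.mem_image_of_mem _ hx)
      exact Finset.mem_image.mpr ⟨proj n x, hx', lift_proj (by omega) p x hd⟩
    have heq : σ = σ1 := hσ.2 σ1 hσ1 hσσ1
    rw [heq, hσ1def, Finset.image_image]
    have : τ'.image (proj n ∘ lift n p) = τ'.image id := by
      apply Finset.image_congr
      intro t _
      exact proj_lift p t
    rw [this, Finset.image_id]
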